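/- arXiv:1912.02360 — 4 statements merged into one kernel-verified Lean document; each statement's English description precedes it below -/
import Mathlib

section
/- Let f : [t₀,∞) → [0,∞) be a nonincreasing right-continuous function such that f(t₀) < 1/(2B) for some constant B > 0, satisfying t·f(τ+t) ≤ B·f(τ)² for all τ ≥ t₀ and all 0 ≤ t ≤ 1, and such that f(t) → 0 as t → ∞. Then f(t) = 0 for all t ≥ t₀ + 4B·f(t₀). -/
theorem stmt0 (t₀ B : ℝ) (hB : 0 < B) (f : ℝ → ℝ)
    (hf0 : ∀ t ≥ t₀, 0 ≤ f t)
    (hmono : AntitoneOn f (Set.Ici t₀))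
    (hrc : ∀ t ≥ t₀, ContinuousWithinAt f (Set.Ici t) t)
    (hsmall : f t₀ < 1 / (2 * B))
    (hiter : ∀ τ ≥ t₀, ∀ t : ℝ, 0 ≤ t → t ≤ 1 → t * f (τ + t) ≤ B * (f τ) ^ 2)
    (hlim : Filter.Tendsto f Filter.atTop (nhds 0)) :
    ∀ t ≥ t₀ + 4 * B * f t₀, f t = 0 := by
  intro t ht
  have hft0 : 0 ≤ f t₀ := hf0 t₀ le_rfl
  set g : ℕ → ℝ := fun j => Nat.rec t₀ (fun _ s => s + 2 * B * f s) j with hg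
  have key : ∀ j : ℕ, t₀ ≤ g j ∧ f (g j) ≤ f t₀ / 2 ^ j ∧
      g j ≤ t₀ + 4 * B * f t₀ * (1 - (1 / 2 : ℝ) ^ j) := by
    intro j
    induction j with
    | zero => simp [hg]
    | succ j ih =>
      obtain ⟨h1, h2, h3⟩ := ih
      have hfgj0 : 0 ≤ f (g j) := hf0 _ h1
      have hfgj : f (g j) ≤ f t₀ := hmono Set.self_mem_Ici h1 h1
      have hgsucc : g (j + 1) = g j + 2 * B * f (g j) := rfl
      have hs0 : 0 ≤ 2 * B * f (g j) := by positivity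
      have hpow : (0:ℝ) < 2 ^ j := by positivity
      refine ⟨by linarith, ?_, ?_⟩
      · have hstep : f (g (j + 1)) ≤ f (g j) / 2 := by
          rcases eq_or_lt_of_le hfgj0 with h0 | h0
          · have he : g (j + 1) = g j := by rw [hgsucc, ← h0]; ring
            rw [he]; linarith
          · have hs1 : 2 * B * f (g j) ≤ 1 := by
              rw [lt_div_iff₀ (by positivity)] at hsmall
              nlinarith
            have hit := hiter (g j) h1 (2 * B * f (g j)) hs0 hs1
            rw [hgsucc]
            have hval : B * f (g j) ^ 2 = 2 * B * f (g j) * (f (g j) / 2) := by ring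
            exact le_of_mul_le_mul_left (hval ▸ hit) (by positivity)
        have : f t₀ / 2 ^ j / 2 = f t₀ / 2 ^ (j + 1) := by
          rw [pow_succ]; ring
        linarith
      · have hbound : 2 * B * f (g j) ≤ 4 * B * f t₀ * (1/2 : ℝ) ^ (j + 1) := by
          have : (1/2 : ℝ) ^ j = 1 / 2 ^ j := by
            rw [div_pow]; norm_num
          have h2' : f (g j) ≤ f t₀ * (1/2 : ℝ) ^ j := by
            rw [this, mul_one_div]; exact h2
          calc 2 * B * f (g j) ≤ 2 * B * (f t₀ * (1/2:ℝ) ^ j) :=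
                mul_le_mul_of_nonneg_left h2' (by positivity)
            _ = 4 * B * f t₀ * (1/2:ℝ) ^ (j + 1) := by rw [pow_succ]; ring
        rw [hgsucc]
        have : 4 * B * f t₀ * (1 - (1/2:ℝ) ^ j) + 4 * B * f t₀ * (1/2:ℝ) ^ (j+1)
            = 4 * B * f t₀ * (1 - (1/2:ℝ) ^ (j+1)) := by
          rw [pow_succ]; ring
        linarith
  have hle : ∀ j : ℕ, f t ≤ f t₀ / 2 ^ j := by
    intro j
    obtain ⟨h1, h2, h3⟩ := key j
    have hgle : g j ≤ t := by
      have hX : (0:ℝ) ≤ 4 * B * f t₀ * (1/2:ℝ) ^ j := by positivity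
      have hE : 4 * B * f t₀ * (1 - (1/2:ℝ) ^ j)
          = 4 * B * f t₀ - 4 * B * f t₀ * (1/2:ℝ) ^ j := by ring
      linarith
    have : f t ≤ f (g j) := hmono h1 (le_trans h1 hgle) hgle
    linarith
  have hft : 0 ≤ f t := hf0 t (by nlinarith)
  rcases eq_or_lt_of_le hft with h | h
  · exact h.symm
  · exfalso
    obtain ⟨j, hj⟩ := pow_unbounded_of_one_lt (f t₀ / f t) (by norm_num : (1:ℝ) < 2)
    have hlej := hle j
    rw [div_lt_iff₀ h] at hj
    have hpow : (0:ℝ) < 2 ^ j := by positivity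
    rw [le_div_iff₀ hpow] at hlej
    nlinarith
end

section
/- Let u : ∂Δ_λ^∨ → ℝ be continuous on the boundary of the convex polytope Δ_λ^∨ ⊂ N_ℝ. Suppose for every x ∈ ∂Δ_λ^∨ there exists p ∈ Δ such that u(y) ≥ u(x) + ⟨p, y−x⟩ for all y ∈ ∂Δ_λ^∨. Then the double Legendre transform u**(x) = sup_{p∈Δ} (⟨x,p⟩ − u*(p)), where u*(p) = sup_{x∈∂Δ_λ^∨}(⟨x,p⟩ − u(x)), defines a convex function on N_ℝ = ℝ^{n+1} that agrees with u on ∂Δ_λ^∨ and satisfies sup_{x∈N_ℝ} |u**(x) − max_{m∈Δ}⟨m,x⟩| < ∞. -/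
theorem stmt3 (n : ℕ) (Δ : Set (Fin (n+1) → ℝ)) (hΔne : Δ.Nonempty) (hΔcomp : IsCompact Δ)
    (hΔconv : Convex ℝ Δ)
    (hΔpoly : ∃ F : Finset (Fin (n+1) → ℝ), Δ = convexHull ℝ (F : Set (Fin (n+1) → ℝ)))
    (P : Set (Fin (n+1) → ℝ)) (hPcomp : IsCompact P) (hPconv : Convex ℝ P)
    (hPpoly : ∃ F : Finset (Fin (n+1) → ℝ), P = convexHull ℝ (F : Set (Fin (n+1) → ℝ)))
    (hPint : (interior P).Nonempty)
    (u : (Fin (n+1) → ℝ) → ℝ) (hu : ContinuousOn u (frontier P))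
    (hsub : ∀ x ∈ frontier P, ∃ p ∈ Δ, ∀ y ∈ frontier P,
      u x + ∑ i, p i * (y i - x i) ≤ u y)
    (ustar u2 : (Fin (n+1) → ℝ) → ℝ)
    (hustar : ∀ p, ustar p = sSup ((fun x => (∑ i, x i * p i) - u x) '' frontier P))
    (hu2 : ∀ x, u2 x = sSup ((fun p => (∑ i, x i * p i) - ustar p) '' Δ)) :
    ConvexOn ℝ Set.univ u2 ∧ (∀ x ∈ frontier P, u2 x = u x) ∧
      ∃ C : ℝ, ∀ x, |u2 x - sSup ((fun m => ∑ i, m i * x i) '' Δ)| ≤ C := by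
  classical
  have hPne : P.Nonempty := hPint.mono interior_subset
  have hPclosed : IsClosed P := hPcomp.isClosed
  have hFcomp : IsCompact (frontier P) :=
    hPcomp.of_isClosed_subset isClosed_frontier
      (frontier_subset_closure.trans hPclosed.closure_eq.subset)
  have hFne : (frontier P).Nonempty := by
    rw [nonempty_frontier_iff]; exact ⟨hPne, hPcomp.ne_univ⟩
  obtain ⟨x0, hx0⟩ := hFne
  obtain ⟨p0, hp0⟩ := hΔne
  -- bounds
  obtain ⟨M, hM⟩ : ∃ M, ∀ x ∈ frontier P, |u x| ≤ M := by
    obtain ⟨M, hM⟩ := hFcomp.exists_bound_of_continuousOn hu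
    exact ⟨M, fun x hx => hM x hx⟩
  obtain ⟨R, hR⟩ : ∃ R, ∀ p ∈ Δ, ∀ i, |p i| ≤ R := by
    obtain ⟨R, hR⟩ := hΔcomp.isBounded.exists_norm_le
    exact ⟨R, fun p hp i => (norm_le_pi_norm p i).trans (hR p hp)⟩
  obtain ⟨B, hB⟩ : ∃ B, ∀ x ∈ frontier P, ∀ i, |x i| ≤ B := by
    obtain ⟨B, hB⟩ := hFcomp.isBounded.exists_norm_le
    exact ⟨B, fun x hx i => (norm_le_pi_norm x i).trans (hB x hx)⟩
  have hR0 : 0 ≤ R := le_trans (abs_nonneg _) (hR p0 hp0 0)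
  have hB0 : 0 ≤ B := le_trans (abs_nonneg _) (hB x0 hx0 0)
  -- pairing bounds
  have hpair : ∀ (x p : Fin (n+1) → ℝ), p ∈ Δ →
      |∑ i, x i * p i| ≤ (∑ i, |x i|) * R := by
    intro x p hp
    calc |∑ i, x i * p i| ≤ ∑ i, |x i * p i| := Finset.abs_sum_le_sum_abs _ _
      _ ≤ ∑ i, |x i| * R := by
          refine Finset.sum_le_sum fun i _ => ?_
          rw [abs_mul]
          exact mul_le_mul_of_nonneg_left (hR p hp i) (abs_nonneg _)
      _ = (∑ i, |x i|) * R := by rw [Finset.sum_mul]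
  set K : ℝ := ((n+1 : ℕ) : ℝ) * B * R with hK
  have hpairF : ∀ x ∈ frontier P, ∀ p ∈ Δ, |∑ i, x i * p i| ≤ K := by
    intro x hx p hp
    refine (hpair x p hp).trans ?_
    have h1 : (∑ i, |x i|) ≤ ((n+1 : ℕ) : ℝ) * B := by
      calc (∑ i : Fin (n+1), |x i|) ≤ ∑ _i : Fin (n+1), B :=
            Finset.sum_le_sum fun i _ => hB x hx i
        _ = ((n+1 : ℕ) : ℝ) * B := by
            simp [Finset.sum_const, Finset.card_univ, nsmul_eq_mul]
    exact mul_le_mul_of_nonneg_right h1 hR0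
  set C1 : ℝ := K + M with hC1
  -- frontier image nonempty & facts about ustar
  have hFimne : ∀ p : Fin (n+1) → ℝ,
      ((fun x => (∑ i, x i * p i) - u x) '' frontier P).Nonempty :=
    fun p => ⟨_, Set.mem_image_of_mem _ hx0⟩
  have hustar_le : ∀ p ∈ Δ, ustar p ≤ C1 := by
    intro p hp
    rw [hustar]
    refine csSup_le (hFimne p) ?_
    rintro w ⟨x, hx, rfl⟩
    dsimp only
    have h1 := (abs_le.1 (hpairF x hx p hp)).2
    have h2 := (abs_le.1 (hM x hx)).1
    simp only [hC1]; linarith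
  have hFbdd : ∀ p ∈ Δ, BddAbove ((fun x => (∑ i, x i * p i) - u x) '' frontier P) := by
    intro p hp
    refine ⟨C1, ?_⟩
    rintro w ⟨x, hx, rfl⟩
    dsimp only
    have h1 := (abs_le.1 (hpairF x hx p hp)).2
    have h2 := (abs_le.1 (hM x hx)).1
    simp only [hC1]; linarith
  have hustar_ge : ∀ p ∈ Δ, -C1 ≤ ustar p := by
    intro p hp
    rw [hustar]
    refine le_trans ?_ (le_csSup (hFbdd p hp) (Set.mem_image_of_mem _ hx0))
    have h1 := (abs_le.1 (hpairF x0 hx0 p hp)).1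
    have h2 := (abs_le.1 (hM x0 hx0)).2
    simp only [hC1]; linarith
  -- each frontier point gives lower bound on ustar
  have hustar_ge' : ∀ p ∈ Δ, ∀ x ∈ frontier P, (∑ i, x i * p i) - u x ≤ ustar p := by
    intro p hp x hx
    rw [hustar]
    exact le_csSup (hFbdd p hp) (Set.mem_image_of_mem _ hx)
  -- bddAbove of the u2 image set for each x
  have hΔimbdd : ∀ x : Fin (n+1) → ℝ,
      BddAbove ((fun p => (∑ i, x i * p i) - ustar p) '' Δ) := by
    intro x
    refine ⟨(∑ i, |x i|) * R + C1, ?_⟩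
    rintro w ⟨p, hp, rfl⟩
    dsimp only
    have h1 := (abs_le.1 (hpair x p hp)).2
    have h2 := hustar_ge p hp
    linarith
  have hΔimne : ∀ x : Fin (n+1) → ℝ,
      ((fun p => (∑ i, x i * p i) - ustar p) '' Δ).Nonempty :=
    fun x => ⟨_, Set.mem_image_of_mem _ hp0⟩
  -- pairing with convex combination
  have hcomb : ∀ (a b : ℝ) (x y p : Fin (n+1) → ℝ),
      (∑ i, (a • x + b • y) i * p i) = a * (∑ i, x i * p i) + b * (∑ i, y i * p i) := by
    intro a b x y p
    simp only [Pi.add_apply, Pi.smul_apply, smul_eq_mul, add_mul, mul_assoc]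
    rw [Finset.sum_add_distrib, Finset.mul_sum, Finset.mul_sum]
  refine ⟨?_, ?_, ?_⟩
  · -- convexity
    refine ⟨convex_univ, ?_⟩
    intro x _ y _ a b ha hb hab
    rw [hu2]
    refine csSup_le (hΔimne _) ?_
    rintro w ⟨p, hp, rfl⟩
    dsimp only
    have h1 : (∑ i, x i * p i) - ustar p ≤ u2 x :=
      (hu2 x) ▸ le_csSup (hΔimbdd x) (Set.mem_image_of_mem _ hp)
    have h2 : (∑ i, y i * p i) - ustar p ≤ u2 y :=
      (hu2 y) ▸ le_csSup (hΔimbdd y) (Set.mem_image_of_mem _ hp)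
    have := hcomb a b x y p
    have ha' := mul_le_mul_of_nonneg_left h1 ha
    have hb' := mul_le_mul_of_nonneg_left h2 hb
    have hab' : a * ustar p + b * ustar p = ustar p := by
      rw [← add_mul, hab, one_mul]
    simp only [smul_eq_mul]
    linarith
  · -- agreement on frontier
    intro x hx
    refine le_antisymm ?_ ?_
    · rw [hu2]
      refine csSup_le (hΔimne x) ?_
      rintro w ⟨p, hp, rfl⟩
      dsimp only
      have := hustar_ge' p hp x hx
      linarith
    · obtain ⟨p, hp, hpx⟩ := hsub x hx
      have h1 : ustar p ≤ (∑ i, x i * p i) - u x := by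
        rw [hustar]
        refine csSup_le (hFimne p) ?_
        rintro w ⟨y, hy, rfl⟩
        dsimp only
        have h2 := hpx y hy
        have h3 : (∑ i, p i * (y i - x i))
            = (∑ i, y i * p i) - (∑ i, x i * p i) := by
          rw [← Finset.sum_sub_distrib]
          exact Finset.sum_congr rfl fun i _ => by ring
        rw [h3] at h2
        linarith
      have h4 : u x ≤ (∑ i, x i * p i) - ustar p := by linarith
      refine h4.trans ?_
      rw [hu2]
      exact le_csSup (hΔimbdd x) (Set.mem_image_of_mem _ hp)
  · -- uniform closeness to support function
    refine ⟨C1, fun x => ?_⟩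
    have hsne : ((fun m => ∑ i, m i * x i) '' Δ).Nonempty :=
      ⟨_, Set.mem_image_of_mem _ hp0⟩
    have hsbdd : BddAbove ((fun m => ∑ i, m i * x i) '' Δ) := by
      refine ⟨(∑ i, |x i|) * R, ?_⟩
      rintro w ⟨p, hp, rfl⟩
      dsimp only
      have h1 : (∑ i, p i * x i) = ∑ i, x i * p i :=
        Finset.sum_congr rfl fun i _ => mul_comm _ _
      rw [h1]
      exact (abs_le.1 (hpair x p hp)).2
    set h : ℝ := sSup ((fun m => ∑ i, m i * x i) '' Δ) with hh
    rw [abs_le]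
    constructor
    · -- h ≤ u2 x + C1
      have : h ≤ u2 x + C1 := by
        rw [hh]
        refine csSup_le hsne ?_
        rintro w ⟨p, hp, rfl⟩
        dsimp only
        have h1 : (∑ i, p i * x i) = ∑ i, x i * p i :=
          Finset.sum_congr rfl fun i _ => mul_comm _ _
        have h2 : (∑ i, x i * p i) - ustar p ≤ u2 x :=
          (hu2 x) ▸ le_csSup (hΔimbdd x) (Set.mem_image_of_mem _ hp)
        have h3 := hustar_le p hp
        rw [h1]; linarith
      linarith
    · -- u2 x ≤ h + C1
      have : u2 x ≤ h + C1 := by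
        rw [hu2]
        refine csSup_le (hΔimne x) ?_
        rintro w ⟨p, hp, rfl⟩
        dsimp only
        have h1 : (∑ i, p i * x i) ≤ h := le_csSup hsbdd (Set.mem_image_of_mem _ hp)
        have h2 : (∑ i, p i * x i) = ∑ i, x i * p i :=
          Finset.sum_congr rfl fun i _ => mul_comm _ _
        have h3 := hustar_ge p hp
        rw [h2] at h1
        linarith
      linarith
end

section
/- Let Φ be a bounded subharmonic function on B₂ × ℝᵏ ⊂ ℝⁿ × ℝᵏ (with the Euclidean metric) which is periodic under the lattice εℤᵏ acting on the ℝᵏ factor, where 0 < ε ≪ 1. Let v(x) = ⨍_{[0,ε]^k} Φ(x,y) dy be the fibrewise average. Assume sup|Φ| ≤ A and that v is Lipschitz with constant L on B₂. Then on B₁ × ℝᵏ one has Φ ≤ v + C·ε^{1/2}, where C depends only on n, k, A, and L. -/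
open MeasureTheory Set Pointwise

/-- Combine a point of `ℝⁿ` and a point of `ℝᵏ` into a point of the Euclidean
space `ℝ^{n+k}`. -/
noncomputable def embXY (n k : ℕ) (x : EuclideanSpace ℝ (Fin n)) (y : Fin k → ℝ) :
    EuclideanSpace ℝ (Fin (n + k)) :=
  (EuclideanSpace.equiv (Fin (n + k)) ℝ).symm
    (Fin.append (EuclideanSpace.equiv (Fin n) ℝ x) y)

lemma embXY_castAdd (n k : ℕ) (x : EuclideanSpace ℝ (Fin n)) (y : Fin k → ℝ) (i : Fin n) :
    embXY n k x y (Fin.castAdd k i) = x i := by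
  simp [embXY, EuclideanSpace.equiv, Fin.append_left]

lemma embXY_natAdd (n k : ℕ) (x : EuclideanSpace ℝ (Fin n)) (y : Fin k → ℝ) (j : Fin k) :
    embXY n k x y (Fin.natAdd n j) = y j := by
  simp [embXY, EuclideanSpace.equiv, Fin.append_right]

lemma embXY_add (n k : ℕ) (x x' : EuclideanSpace ℝ (Fin n)) (y y' : Fin k → ℝ) :
    embXY n k x y + embXY n k x' y' = embXY n k (x + x') (y + y') := by
  ext i
  induction i using Fin.addCases with
  | left i => simp [embXY_castAdd]
  | right j => simp [embXY_natAdd]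

lemma embXY_decomp (n k : ℕ) (z : EuclideanSpace ℝ (Fin (n + k))) :
    embXY n k ((EuclideanSpace.equiv (Fin n) ℝ).symm (fun i => z (Fin.castAdd k i)))
      (fun j => z (Fin.natAdd n j)) = z := by
  ext i
  induction i using Fin.addCases with
  | left i => simp [embXY_castAdd]
  | right j => simp [embXY_natAdd]

lemma norm_embXY_zero (n k : ℕ) (c : Fin k → ℝ) :
    ‖embXY n k 0 c‖ = Real.sqrt (∑ j, (c j) ^ 2) := by
  rw [EuclideanSpace.norm_eq]
  congr 1
  rw [Fin.sum_univ_add (f := fun i => ‖embXY n k 0 c i‖ ^ 2)]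
  simp [embXY_castAdd, embXY_natAdd, sq_abs]

lemma norm_proj_le (n k : ℕ) (z w : EuclideanSpace ℝ (Fin (n + k))) :
    ‖(EuclideanSpace.equiv (Fin n) ℝ).symm (fun i => w (Fin.castAdd k i))
      - (EuclideanSpace.equiv (Fin n) ℝ).symm (fun i => z (Fin.castAdd k i))‖ ≤ ‖w - z‖ := by
  rw [EuclideanSpace.norm_eq, EuclideanSpace.norm_eq]
  apply Real.sqrt_le_sqrt
  rw [Fin.sum_univ_add (f := fun i => ‖(w - z) i‖ ^ 2)]
  have : ∀ i : Fin n,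
      ‖((EuclideanSpace.equiv (Fin n) ℝ).symm (fun i => w (Fin.castAdd k i))
        - (EuclideanSpace.equiv (Fin n) ℝ).symm (fun i => z (Fin.castAdd k i))) i‖ ^ 2
      = ‖(w - z) (Fin.castAdd k i)‖ ^ 2 := by
    intro i; rfl
  rw [Finset.sum_congr rfl (fun i _ => this i)]
  have h2 : (0:ℝ) ≤ ∑ j : Fin k, ‖(w - z) (Fin.natAdd n j)‖ ^ 2 :=
    Finset.sum_nonneg fun j _ => sq_nonneg _
  linarith
lemma cube_ae_eq (k : ℕ) (ε : ℝ) :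
    (Set.univ.pi (fun _ : Fin k => Set.Icc (0:ℝ) ε))
      =ᵐ[(volume : Measure (Fin k → ℝ))]
    (Set.univ.pi (fun _ : Fin k => Set.Ico (0:ℝ) ε)) := by
  rw [Filter.eventuallyEq_set]
  have h : ∀ᵐ y : Fin k → ℝ ∂volume, ∀ j : Fin k, y j ≠ ε := by
    rw [MeasureTheory.ae_all_iff]
    intro j
    rw [volume_pi]
    exact MeasureTheory.Measure.ae_eval_ne (fun _ => (volume : Measure ℝ)) j ε
  filter_upwards [h] with y hy
  simp only [Set.mem_pi, Set.mem_univ, forall_true_left, Set.mem_Icc, Set.mem_Ico]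
  constructor
  · intro h1 j; exact ⟨(h1 j).1, lt_of_le_of_ne (h1 j).2 (hy j)⟩
  · intro h1 j; exact ⟨(h1 j).1, le_of_lt (h1 j).2⟩

lemma periodic_translate (k : ℕ) (ε : ℝ) (hε : 0 < ε) (f : (Fin k → ℝ) → ℝ)
    (hf : ∀ (y : Fin k → ℝ) (m : Fin k → ℤ), f (y + fun j => ε * (m j : ℝ)) = f y)
    (t : Fin k → ℝ) :
    ∫ c in Set.univ.pi (fun _ : Fin k => Set.Icc (0:ℝ) ε), f (t + c)
      = ∫ c in Set.univ.pi (fun _ : Fin k => Set.Icc (0:ℝ) ε), f c := by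
  have hccio := cube_ae_eq k ε
  rw [setIntegral_congr_set hccio, setIntegral_congr_set hccio]
  set w : Fin k → ℝˣ := fun _ => Units.mk0 ε hε.ne' with hw
  set b : Module.Basis (Fin k) ℝ (Fin k → ℝ) := (Pi.basisFun ℝ (Fin k)).unitsSMul w with hb
  have hdom : ZSpan.fundamentalDomain b = Set.univ.pi (fun _ : Fin k => Set.Ico (0:ℝ) ε) := by
    ext x
    simp only [ZSpan.fundamentalDomain, Set.mem_setOf_eq, Module.Basis.repr_unitsSMul,
      Pi.basisFun_repr, Set.mem_pi, Set.mem_univ, forall_true_left, Set.mem_Ico,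
      Units.smul_def, Units.val_inv_eq_inv_val, Units.val_mk0, smul_eq_mul,
      ← div_eq_inv_mul, div_lt_one hε, hb, hw]
    refine forall_congr' fun j => and_congr ?_ Iff.rfl
    rw [le_div_iff₀ hε, zero_mul]
  have hspan : ∀ g ∈ Submodule.span ℤ (Set.range ⇑b),
      ∃ m : Fin k → ℤ, g = fun j => ε * (m j : ℝ) := by
    intro g hg
    induction hg using Submodule.span_induction with
    | mem u hu =>
      obtain ⟨i, rfl⟩ := hu
      refine ⟨fun j => if i = j then 1 else 0, ?_⟩
      ext j
      simp only [hb, Module.Basis.unitsSMul_apply, hw, Units.smul_def, Units.val_mk0,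
        Pi.basisFun_apply, Pi.smul_apply, smul_eq_mul]
      by_cases h : i = j <;> simp [h, Pi.single_apply]
    | zero => exact ⟨0, by ext j; simp⟩
    | add u v _ _ hu hv =>
      obtain ⟨m1, rfl⟩ := hu; obtain ⟨m2, rfl⟩ := hv
      refine ⟨m1 + m2, ?_⟩
      ext j
      simp only [Pi.add_apply]
      push_cast; ring
    | smul z u _ hu =>
      obtain ⟨m, rfl⟩ := hu
      refine ⟨z • m, ?_⟩
      ext j
      simp only [Pi.smul_apply, smul_eq_mul, zsmul_eq_mul]
      push_cast; ring
  haveI : MeasurableVAdd (↥(Submodule.span ℤ (Set.range ⇑b))) (Fin k → ℝ) := by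
    constructor
    · intro x
      exact (measurable_subtype_coe.add_const x)
  haveI : VAddInvariantMeasure (↥(Submodule.span ℤ (Set.range ⇑b))) (Fin k → ℝ) volume := by
    constructor
    intro g s hs
    show volume ((fun x => (g : Fin k → ℝ) + x) ⁻¹' s) = volume s
    rw [measure_preimage_add]
  haveI : VAddCommClass (Fin k → ℝ) (↥(Submodule.span ℤ (Set.range ⇑b))) (Fin k → ℝ) :=
    ⟨fun a g x => by show a + (↑g + x) = ↑g + (a + x); module⟩
  have hQ : IsAddFundamentalDomain (↥(Submodule.span ℤ (Set.range ⇑b)))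
      (Set.univ.pi (fun _ : Fin k => Set.Ico (0:ℝ) ε)) volume := by
    rw [← hdom]; exact ZSpan.isAddFundamentalDomain b volume
  have hQt := hQ.vadd_of_comm t
  have hinv : ∀ (g : ↥(Submodule.span ℤ (Set.range ⇑b))) (x : Fin k → ℝ),
      f (g +ᵥ x) = f x := by
    rintro ⟨g, hg⟩ x
    obtain ⟨m, rfl⟩ := hspan g hg
    have := hf x m
    show f ((fun j => ε * (m j : ℝ)) + x) = f x
    rwa [add_comm]
  calc ∫ c in Set.univ.pi (fun _ : Fin k => Set.Ico (0:ℝ) ε), f (t + c)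
      = ∫ u in (fun c => t + c) '' Set.univ.pi (fun _ : Fin k => Set.Ico (0:ℝ) ε), f u := by
        rw [(measurePreserving_add_left volume t).setIntegral_image_emb
          (Homeomorph.addLeft t).measurableEmbedding f _]
    _ = ∫ c in Set.univ.pi (fun _ : Fin k => Set.Ico (0:ℝ) ε), f c := by
        have him : (fun c => t + c) '' Set.univ.pi (fun _ : Fin k => Set.Ico (0:ℝ) ε)
            = t +ᵥ Set.univ.pi (fun _ : Fin k => Set.Ico (0:ℝ) ε) := rfl
        rw [him]
        exact hQt.setIntegral_eq hQ hinv
lemma poly_bound (d : ℕ) : ∀ t : ℝ, 0 ≤ t → t ≤ 1 →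
    (1+t)^d - (1-t)^d ≤ (2^(d+1) - 2) * t := by
  induction d with
  | zero => intro t h0 h1; norm_num
  | succ d ih =>
    intro t h0 h1
    have h2 := ih t h0 h1
    have e : (1+t)^(d+1) - (1-t)^(d+1)
        = (1+t)*((1+t)^d - (1-t)^d) + 2*t*(1-t)^d := by ring
    have hb : (1-t)^d ≤ 1 := pow_le_one₀ (by linarith) (by linarith)
    have hnn : (0:ℝ) ≤ (1+t)^d - (1-t)^d :=
      sub_nonneg.2 (pow_le_pow_left₀ (by linarith) (by linarith) d)
    have h2d : (2:ℝ) ≤ 2^(d+1) := by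
      calc (2:ℝ) = 2^1 := by norm_num
      _ ≤ 2^(d+1) := by
        apply pow_le_pow_right₀ (by norm_num)
        omega
    have step1 : (1+t)*((1+t)^d - (1-t)^d) ≤ 2*((2^(d+1)-2)*t) := by nlinarith
    have step2 : 2*t*(1-t)^d ≤ 2*t := by nlinarith
    have h2p : (2:ℝ)^(d+1+1) = 2*2^(d+1) := by ring
    nlinarith
lemma norm_sq_eq' {m : ℕ} (x : EuclideanSpace ℝ (Fin m)) : ‖x‖^2 = ∑ i, (x i)^2 := by
  rw [EuclideanSpace.norm_eq, Real.sq_sqrt (by positivity)]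
  congr 1; ext i; rw [Real.norm_eq_abs, sq_abs]

set_option maxHeartbeats 2000000 in
theorem stmt9 (n k : ℕ) (A L : ℝ) (hA : 0 ≤ A) (hL : 0 ≤ L) :
    ∃ C : ℝ, ∀ (ε : ℝ), 0 < ε → ε < 1 →
      ∀ (Φ : EuclideanSpace ℝ (Fin (n + k)) → ℝ) (v : EuclideanSpace ℝ (Fin n) → ℝ),
      Measurable Φ →
      (∀ z, |Φ z| ≤ A) →
      (∀ (z : EuclideanSpace ℝ (Fin (n + k))) (m : Fin k → ℤ),
        Φ (z + embXY n k 0 (fun j => ε * (m j : ℝ))) = Φ z) →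
      (∀ (z : EuclideanSpace ℝ (Fin (n + k))) (r : ℝ), 0 < r →
        Metric.ball z r ⊆
          {w : EuclideanSpace ℝ (Fin (n + k)) | ∑ i : Fin n, (w (Fin.castAdd k i))^2 < 4} →
        Φ z ≤ ⨍ w in Metric.ball z r, Φ w) →
      (∀ x, v x = ⨍ y in Set.univ.pi (fun _ : Fin k => Set.Icc (0:ℝ) ε),
        Φ (embXY n k x y)) →
      LipschitzOnWith (Real.toNNReal L) v {x : EuclideanSpace ℝ (Fin n) | ‖x‖ < 2} →
      ∀ z : EuclideanSpace ℝ (Fin (n + k)),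
        (∑ i : Fin n, (z (Fin.castAdd k i))^2 < 1) →
        Φ z ≤ v ((EuclideanSpace.equiv (Fin n) ℝ).symm (fun i => z (Fin.castAdd k i)))
          + C * Real.sqrt ε := by
  set d := n + k with hd
  refine ⟨L + (2^(d+2) + 2) * A * Real.sqrt k, ?_⟩
  intro ε hε hε1 Φ v hmeas hbd hper hsub hv hlip z hz
  set C := L + (2^(d+2) + 2) * A * Real.sqrt k with hC
  have hk0 : (0:ℝ) ≤ Real.sqrt k := Real.sqrt_nonneg _
  have hε0 : (0:ℝ) ≤ Real.sqrt ε := Real.sqrt_nonneg _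
  have hC0 : 2 * A * Real.sqrt k ≤ C := by
    have : (0:ℝ) ≤ 2^(d+2) * A * Real.sqrt k := by positivity
    nlinarith
  -- the cube
  set Q : Set (Fin k → ℝ) := Set.univ.pi (fun _ : Fin k => Set.Icc (0:ℝ) ε) with hQ
  have hQm : MeasurableSet Q := MeasurableSet.univ_pi fun _ => measurableSet_Icc
  have hQvol : volume Q = (ENNReal.ofReal ε)^k := by
    rw [hQ, volume_pi_pi]
    simp [Real.volume_Icc]
  have hQfin : volume Q < ⊤ := by
    rw [hQvol]; exact ENNReal.pow_lt_top ENNReal.ofReal_lt_top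
  have hQpos : 0 < volume Q := by
    rw [hQvol]; exact ENNReal.pow_pos (ENNReal.ofReal_pos.2 hε) _
  set MQ : ℝ := (volume Q).toReal with hMQdef
  have hMQ : 0 < MQ := ENNReal.toReal_pos hQpos.ne' hQfin.ne
  -- bound on v
  have hvA : ∀ x, |v x| ≤ A := by
    intro x
    rw [hv x, setAverage_eq]
    have hnorm : ‖∫ y in Q, Φ (embXY n k x y)‖ ≤ A * MQ :=
      norm_setIntegral_le_of_norm_le_const hQfin
        (fun y _ => by rw [Real.norm_eq_abs]; exact hbd _)
    rw [smul_eq_mul, abs_mul, abs_inv, abs_of_nonneg measureReal_nonneg]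
    rw [Real.norm_eq_abs] at hnorm
    calc MQ⁻¹ * |∫ y in Q, Φ (embXY n k x y)| ≤ MQ⁻¹ * (A * MQ) := by
          apply mul_le_mul_of_nonneg_left hnorm (by positivity)
      _ = A := by field_simp
  set x₀ := (EuclideanSpace.equiv (Fin n) ℝ).symm (fun i => z (Fin.castAdd k i)) with hx₀def
  have hx₀ : ‖x₀‖ < 1 := by
    have h1 : ‖x₀‖^2 < 1 := by
      rw [norm_sq_eq' x₀]
      convert hz using 2
      rfl
    nlinarith [norm_nonneg x₀]
  by_cases hcase : Real.sqrt k * Real.sqrt ε ≤ 1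
  swap
  · -- easy case
    push_neg at hcase
    have h1 : Φ z ≤ A := (abs_le.1 (hbd z)).2
    have h2 : -A ≤ v x₀ := (abs_le.1 (hvA x₀)).1
    have h3 : 2 * A ≤ 2 * A * (Real.sqrt k * Real.sqrt ε) := by nlinarith
    have h4 : 2 * A * (Real.sqrt k * Real.sqrt ε) ≤ C * Real.sqrt ε := by
      have := mul_le_mul_of_nonneg_right hC0 hε0
      nlinarith
    linarith
  -- main case
  set t := Real.sqrt k * Real.sqrt ε with ht
  set r := Real.sqrt ε with hrdef
  set δ := Real.sqrt k * ε with hδdef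
  have hr : 0 < r := Real.sqrt_pos.2 hε
  have hr1 : r ≤ 1 := by
    rw [hrdef, show (1:ℝ) = Real.sqrt 1 from (Real.sqrt_one).symm]
    exact Real.sqrt_le_sqrt hε1.le
  have ht0 : 0 ≤ t := by positivity
  have hrt : r * t = δ := by
    rw [hrdef, ht, hδdef, ← mul_assoc, mul_comm (Real.sqrt ε) (Real.sqrt k), mul_assoc,
      Real.mul_self_sqrt hε.le]
  have hδ0 : 0 ≤ δ := by positivity
  have hδr : δ ≤ r := by nlinarith
  set B := Metric.ball z r with hB
  have hBfin : volume B < ⊤ := measure_ball_lt_top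
  have hBpos : 0 < volume B := Metric.measure_ball_pos volume z hr
  set VB : ℝ := (volume B).toReal with hVBdef
  have hVB : 0 < VB := ENNReal.toReal_pos hBpos.ne' hBfin.ne
  -- projections
  have hproj_mem : ∀ w ∈ B,
      ‖(EuclideanSpace.equiv (Fin n) ℝ).symm (fun i => w (Fin.castAdd k i))‖ < 2 := by
    intro w hw
    set xw := (EuclideanSpace.equiv (Fin n) ℝ).symm (fun i => w (Fin.castAdd k i))
    have h1 : ‖xw - x₀‖ ≤ ‖w - z‖ := norm_proj_le n k z w
    have h2 : ‖w - z‖ < r := by rwa [← dist_eq_norm, ← Metric.mem_ball]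
    calc ‖xw‖ = ‖(xw - x₀) + x₀‖ := by rw [sub_add_cancel]
      _ ≤ ‖xw - x₀‖ + ‖x₀‖ := norm_add_le _ _
      _ < 2 := by linarith
  have hslab : B ⊆ {w : EuclideanSpace ℝ (Fin (n + k)) |
      ∑ i : Fin n, (w (Fin.castAdd k i))^2 < 4} := by
    intro w hw
    have h2 := hproj_mem w hw
    have h3 : ∑ i : Fin n, (w (Fin.castAdd k i))^2
        = ‖(EuclideanSpace.equiv (Fin n) ℝ).symm (fun i => w (Fin.castAdd k i))‖^2 := by
      rw [norm_sq_eq']; rfl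
    simp only [Set.mem_setOf_eq]
    rw [h3]
    nlinarith [norm_nonneg ((EuclideanSpace.equiv (Fin n) ℝ).symm
      (fun i => w (Fin.castAdd k i)))]
  -- mean value inequality
  set I := ∫ w in B, Φ w with hI
  have hMVI : Φ z ≤ VB⁻¹ * I := by
    have := hsub z r hr hslab
    rwa [setAverage_eq, smul_eq_mul] at this
  -- integrability of Phi on B
  haveI hfactB : Fact (volume B < ⊤) := ⟨hBfin⟩
  haveI hfactQ : Fact (volume Q < ⊤) := ⟨hQfin⟩
  have hΦint : ∀ s : Set (EuclideanSpace ℝ (Fin (n+k))), volume s < ⊤ → IntegrableOn Φ s :=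
    fun s hs =>
      Integrable.mono' (integrableOn_const hs.ne) hmeas.aestronglyMeasurable.restrict
        (Filter.Eventually.of_forall fun w => by rw [Real.norm_eq_abs]; exact hbd w)
  -- annulus
  set Wr : ℝ := (volume (Metric.ball z (r+δ) \ Metric.ball z (r-δ))).toReal with hWrdef
  have hWr0 : 0 ≤ Wr := ENNReal.toReal_nonneg
  have hannfin : volume (Metric.ball z (r+δ) \ Metric.ball z (r-δ)) < ⊤ :=
    lt_of_le_of_lt (measure_mono Set.diff_subset) measure_ball_lt_top
  -- step (i)
  have hstepi : ∀ c ∈ Q, I ≤ (∫ w in B, Φ (w + embXY n k 0 c)) + 2*A*Wr := by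
    intro c hc
    set cH := embXY n k 0 c with hcH
    have hcHnorm : ‖cH‖ ≤ δ := by
      rw [hcH, norm_embXY_zero]
      have hsum : ∑ j, (c j)^2 ≤ (k:ℝ) * ε^2 := by
        calc ∑ j, (c j)^2 ≤ ∑ _j : Fin k, ε^2 := by
              apply Finset.sum_le_sum
              intro j _
              have hcj := hc j (Set.mem_univ j)
              rw [Set.mem_Icc] at hcj
              nlinarith [hcj.1, hcj.2]
          _ = (k:ℝ) * ε^2 := by rw [Finset.sum_const]; simp [mul_comm]
      calc Real.sqrt (∑ j, (c j)^2) ≤ Real.sqrt ((k:ℝ) * ε^2) := Real.sqrt_le_sqrt hsum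
        _ = Real.sqrt k * ε := by
            rw [Real.sqrt_mul (Nat.cast_nonneg k), Real.sqrt_sq hε.le]
    set B' := Metric.ball (z + cH) r with hB'
    have hB'fin : volume B' < ⊤ := measure_ball_lt_top
    have h_img : (fun w => w + cH) '' B = B' := by
      ext u
      constructor
      · rintro ⟨w, hw, rfl⟩
        rw [hB', Metric.mem_ball, dist_add_right]
        rwa [hB, Metric.mem_ball] at hw
      · intro hu
        refine ⟨u - cH, ?_, by module⟩
        rw [hB, Metric.mem_ball]
        rw [hB', Metric.mem_ball] at hu
        calc dist (u - cH) z = dist u (z + cH) := by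
              rw [dist_eq_norm, dist_eq_norm]; congr 1; module
          _ < r := hu
    have hshift : ∫ w in B, Φ (w + cH) = ∫ u in B', Φ u := by
      rw [← h_img]
      exact ((measurePreserving_add_right volume cH).setIntegral_image_emb
        (Homeomorph.addRight cH).measurableEmbedding Φ B).symm
    have hzdist : dist z (z + cH) = ‖cH‖ := by
      rw [dist_eq_norm]
      simp
    have hsub1 : B \ B' ⊆ Metric.ball z (r+δ) \ Metric.ball z (r-δ) := by
      rintro w ⟨hw1, hw2⟩
      rw [hB, Metric.mem_ball] at hw1
      rw [hB', Metric.mem_ball, not_lt] at hw2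
      constructor
      · rw [Metric.mem_ball]; linarith
      · rw [Metric.mem_ball, not_lt]
        have := dist_triangle w z (z + cH)
        linarith
    have hsub2 : B' \ B ⊆ Metric.ball z (r+δ) \ Metric.ball z (r-δ) := by
      rintro w ⟨hw1, hw2⟩
      rw [hB', Metric.mem_ball] at hw1
      rw [hB, Metric.mem_ball, not_lt] at hw2
      constructor
      · rw [Metric.mem_ball]
        have := dist_triangle w (z + cH) z
        rw [dist_comm (z + cH) z] at this
        linarith
      · rw [Metric.mem_ball, not_lt]; linarith
    have habs : ∀ s : Set (EuclideanSpace ℝ (Fin (n+k))), MeasurableSet s →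
        s ⊆ Metric.ball z (r+δ) \ Metric.ball z (r-δ) → |∫ w in s, Φ w| ≤ A * Wr := by
      intro s hsm hss
      have hfin : volume s < ⊤ := lt_of_le_of_lt (measure_mono hss) hannfin
      have h1 : ‖∫ w in s, Φ w‖ ≤ A * (volume s).toReal :=
        norm_setIntegral_le_of_norm_le_const hfin
          (fun w _ => by rw [Real.norm_eq_abs]; exact hbd w)
      rw [Real.norm_eq_abs] at h1
      calc |∫ w in s, Φ w| ≤ A * (volume s).toReal := h1
        _ ≤ A * Wr := by
            apply mul_le_mul_of_nonneg_left _ hA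
            exact ENNReal.toReal_mono hannfin.ne (measure_mono hss)
    have e1 : (∫ w in B ∩ B', Φ w) + (∫ w in B \ B', Φ w) = I :=
      integral_inter_add_diff measurableSet_ball (hΦint B hBfin)
    have e2 : (∫ w in B' ∩ B, Φ w) + (∫ w in B' \ B, Φ w) = ∫ w in B', Φ w :=
      integral_inter_add_diff measurableSet_ball (hΦint B' hB'fin)
    have ecomm : (∫ w in B ∩ B', Φ w) = ∫ w in B' ∩ B, Φ w := by rw [Set.inter_comm]
    have habs1 := habs (B \ B') (measurableSet_ball.diff measurableSet_ball) hsub1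
    have habs2 := habs (B' \ B) (measurableSet_ball.diff measurableSet_ball) hsub2
    rw [hshift]
    have h5 := abs_le.1 habs1
    have h6 := abs_le.1 habs2
    linarith [h5.2, h6.1]
  -- step (ii)
  set f : (Fin k → ℝ) → EuclideanSpace ℝ (Fin (n+k)) → ℝ :=
    fun c w => Φ (w + embXY n k 0 c) with hfdef
  have hemb_meas : Measurable (fun c : Fin k → ℝ => embXY n k 0 c) := by
    refine (WithLp.measurable_toLp 2 (Fin (n+k) → ℝ)).comp
      (f := fun c => (embXY n k 0 c).ofLp) ?_
    apply measurable_pi_lambda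
    intro i
    induction i using Fin.addCases with
    | left i =>
      simp only [embXY_castAdd]
      exact measurable_const
    | right j =>
      simp only [embXY_natAdd]
      exact measurable_pi_apply j
  have hfmeas : Measurable (Function.uncurry f) := by
    apply hmeas.comp
    exact measurable_snd.add (hemb_meas.comp measurable_fst)
  have hintf : Integrable (Function.uncurry f)
      ((volume.restrict Q).prod (volume.restrict B)) := by
    apply Integrable.mono' (integrable_const A) hfmeas.aestronglyMeasurable
    exact Filter.Eventually.of_forall fun p => by rw [Real.norm_eq_abs]; exact hbd _
  have hFint : Integrable (fun c => ∫ w in B, f c w) (volume.restrict Q) :=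
    hintf.integral_prod_left
  have hswap : ∫ c in Q, (∫ w in B, f c w) = ∫ w in B, (∫ c in Q, f c w) :=
    integral_integral_swap hintf
  have hclaim4 : ∀ w : EuclideanSpace ℝ (Fin (n+k)),
      (∫ c in Q, f c w)
        = MQ * v ((EuclideanSpace.equiv (Fin n) ℝ).symm (fun i => w (Fin.castAdd k i))) := by
    intro w
    set xw := (EuclideanSpace.equiv (Fin n) ℝ).symm (fun i => w (Fin.castAdd k i)) with hxw
    set tw : Fin k → ℝ := fun j => w (Fin.natAdd n j) with htwdef
    have hwdec : embXY n k xw tw = w := embXY_decomp n k w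
    have hrewrite : ∀ c : Fin k → ℝ, f c w = Φ (embXY n k xw (tw + c)) := by
      intro c
      show Φ (w + embXY n k 0 c) = _
      rw [← hwdec, embXY_add, add_zero]
    have hperf : ∀ (y : Fin k → ℝ) (m : Fin k → ℤ),
        Φ (embXY n k xw (y + fun j => ε * (m j : ℝ))) = Φ (embXY n k xw y) := by
      intro y m
      rw [show embXY n k xw (y + fun j => ε*(m j:ℝ))
            = embXY n k xw y + embXY n k 0 (fun j => ε*(m j:ℝ)) by
          rw [embXY_add, add_zero]]
      exact hper _ m
    calc (∫ c in Q, f c w) = ∫ c in Q, Φ (embXY n k xw (tw + c)) := by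
          apply integral_congr_ae
          exact Filter.Eventually.of_forall fun c => hrewrite c
      _ = ∫ c in Q, Φ (embXY n k xw c) := by
          exact periodic_translate k ε hε (fun y => Φ (embXY n k xw y)) hperf tw
      _ = MQ * v xw := by
          rw [hv xw, setAverage_eq, smul_eq_mul, measureReal_def, ← hMQdef, ← mul_assoc,
            mul_inv_cancel₀ hMQ.ne', one_mul]
  have hstepii : I ≤ (∫ w in B, v ((EuclideanSpace.equiv (Fin n) ℝ).symm
      (fun i => w (Fin.castAdd k i)))) + 2*A*Wr := by
    have hconstint : ∫ _c in Q, (I - 2*A*Wr) = MQ * (I - 2*A*Wr) := by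
      rw [setIntegral_const, smul_eq_mul, measureReal_def, ← hMQdef]
    have hmono : ∫ _c in Q, (I - 2*A*Wr) ≤ ∫ c in Q, (∫ w in B, f c w) := by
      apply integral_mono_ae (integrable_const _) hFint
      rw [Filter.EventuallyLE, ae_restrict_iff' hQm]
      refine Filter.Eventually.of_forall fun c hc => ?_
      have hkey : (∫ w in B, f c w) = ∫ w in B, Φ (w + embXY n k 0 c) := rfl
      rw [hkey]
      linarith [hstepi c hc]
    have hRHS : ∫ c in Q, (∫ w in B, f c w)
        = MQ * ∫ w in B, v ((EuclideanSpace.equiv (Fin n) ℝ).symm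
          (fun i => w (Fin.castAdd k i))) := by
      rw [hswap]
      rw [integral_congr_ae (Filter.Eventually.of_forall hclaim4)]
      rw [integral_const_mul]
    have hfinal : MQ * (I - 2*A*Wr) ≤ MQ * (∫ w in B, v ((EuclideanSpace.equiv (Fin n) ℝ).symm
        (fun i => w (Fin.castAdd k i)))) := by
      calc MQ * (I - 2*A*Wr) = ∫ _c in Q, (I - 2*A*Wr) := hconstint.symm
        _ ≤ ∫ c in Q, (∫ w in B, f c w) := hmono
        _ = _ := hRHS
    have := le_of_mul_le_mul_left hfinal hMQ
    linarith
  set J := ∫ w in B, v ((EuclideanSpace.equiv (Fin n) ℝ).symm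
    (fun i => w (Fin.castAdd k i))) with hJ
  -- step (iii)
  have hvproj_int : Integrable (fun w : EuclideanSpace ℝ (Fin (n+k)) =>
      v ((EuclideanSpace.equiv (Fin n) ℝ).symm (fun i => w (Fin.castAdd k i))))
      (volume.restrict B) := by
    have h1 : Integrable (fun w => ∫ c in Q, f c w) (volume.restrict B) :=
      hintf.integral_prod_right
    have h2 : (fun w : EuclideanSpace ℝ (Fin (n+k)) => v ((EuclideanSpace.equiv (Fin n) ℝ).symm
        (fun i => w (Fin.castAdd k i)))) = fun w => MQ⁻¹ * ∫ c in Q, f c w := by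
      funext w
      rw [hclaim4 w, ← mul_assoc, inv_mul_cancel₀ hMQ.ne', one_mul]
    rw [h2]
    exact h1.const_mul _
  have hstepiii : J ≤ (v x₀ + L*r) * VB := by
    have hpt : ∀ w ∈ B, v ((EuclideanSpace.equiv (Fin n) ℝ).symm
        (fun i => w (Fin.castAdd k i))) ≤ v x₀ + L * r := by
      intro w hw
      set xw := (EuclideanSpace.equiv (Fin n) ℝ).symm (fun i => w (Fin.castAdd k i)) with hxwdef
      have hm1 : xw ∈ {x : EuclideanSpace ℝ (Fin n) | ‖x‖ < 2} := hproj_mem w hw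
      have hm2 : x₀ ∈ {x : EuclideanSpace ℝ (Fin n) | ‖x‖ < 2} := by
        simp only [Set.mem_setOf_eq]; linarith
      have hdist := hlip.dist_le_mul xw hm1 x₀ hm2
      rw [Real.coe_toNNReal L hL] at hdist
      have hd2 : dist xw x₀ ≤ r := by
        rw [dist_eq_norm]
        have h3 := norm_proj_le n k z w
        have hwz : ‖w - z‖ < r := by rwa [← dist_eq_norm, ← Metric.mem_ball]
        calc ‖xw - x₀‖ ≤ ‖w - z‖ := h3
          _ ≤ r := hwz.le
      have hd3 : L * dist xw x₀ ≤ L * r := mul_le_mul_of_nonneg_left hd2 hL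
      have hd4 : v xw - v x₀ ≤ dist (v xw) (v x₀) := by
        rw [Real.dist_eq]; exact le_abs_self _
      linarith
    have hm := integral_mono_ae hvproj_int (integrable_const (v x₀ + L*r))
      ((ae_restrict_iff' measurableSet_ball).2 (Filter.Eventually.of_forall hpt))
    rw [setIntegral_const, smul_eq_mul, measureReal_def, ← hVBdef] at hm
    calc J ≤ VB * (v x₀ + L*r) := hm
      _ = (v x₀ + L*r) * VB := mul_comm _ _
  -- annulus volume bound
  have hWrbound : 2*A*Wr ≤ 2^(d+2) * A * t * VB := by
    rcases Nat.eq_zero_or_pos k with hk | hk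
    · have hδ0' : δ = 0 := by rw [hδdef, hk]; simp
      have hWr0' : Wr = 0 := by
        rw [hWrdef, hδ0', add_zero, sub_zero, Set.diff_self]
        simp
      rw [hWr0', mul_zero]
      positivity
    · haveI : Nonempty (Fin (n+k)) := ⟨⟨0, by omega⟩⟩
      haveI : Nontrivial (EuclideanSpace ℝ (Fin (n+k))) := inferInstance
      set ι := (volume (Metric.ball (0 : EuclideanSpace ℝ (Fin (n+k))) 1)).toReal with hι
      have hι0 : 0 ≤ ι := ENNReal.toReal_nonneg
      have hball : ∀ s : ℝ, 0 ≤ s → (volume (Metric.ball z s)).toReal = s^d * ι := by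
        intro s hs
        rw [Measure.addHaar_ball volume z hs, ENNReal.toReal_mul,
          ENNReal.toReal_ofReal (by positivity), finrank_euclideanSpace_fin, ← hι]
      have hrd0 : (0:ℝ) ≤ r - δ := by linarith
      have hsubball : Metric.ball z (r-δ) ⊆ Metric.ball z (r+δ) :=
        Metric.ball_subset_ball (by linarith)
      have hdiff : volume (Metric.ball z (r+δ) \ Metric.ball z (r-δ))
          = volume (Metric.ball z (r+δ)) - volume (Metric.ball z (r-δ)) :=
        measure_diff hsubball measurableSet_ball.nullMeasurableSet measure_ball_lt_top.ne
      have hWreq : Wr = (r+δ)^d * ι - (r-δ)^d * ι := by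
        rw [hWrdef, hdiff, ENNReal.toReal_sub_of_le (measure_mono hsubball)
          measure_ball_lt_top.ne, hball _ (by linarith), hball _ hrd0]
      have hpoly := poly_bound d t ht0 hcase
      have hplus : r + δ = r * (1+t) := by rw [← hrt]; ring
      have hminus : r - δ = r * (1-t) := by rw [← hrt]; ring
      have hrd : (0:ℝ) ≤ r^d := by positivity
      have hVBeq : VB = r^d * ι := by rw [hVBdef, hB, hball r hr.le]
      rw [hWreq, hVBeq, hplus, hminus, mul_pow, mul_pow]
      have hmul := mul_le_mul_of_nonneg_left hpoly
        (mul_nonneg (mul_nonneg hA hrd) hι0)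
      have h2pow : (2:ℝ)^(d+2) = 2*2^(d+1) := by ring
      nlinarith [mul_nonneg (mul_nonneg (mul_nonneg hA ht0) hrd) hι0]
  -- final assembly
  calc Φ z ≤ VB⁻¹ * I := hMVI
    _ ≤ VB⁻¹ * ((v x₀ + L*r) * VB + 2^(d+2)*A*t*VB) := by
        apply mul_le_mul_of_nonneg_left _ (inv_nonneg.2 hVB.le)
        linarith [hstepii, hstepiii, hWrbound]
    _ = v x₀ + L*r + 2^(d+2)*A*t := by
        have hne : VB ≠ 0 := hVB.ne'
        field_simp
    _ ≤ v x₀ + C * r := by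
        rw [hC, ht]
        nlinarith [mul_nonneg (mul_nonneg hA hk0) hr.le]
end

section
/- Let u be a convex function on ℝⁿ whose subgradients all lie in a compact convex set Δ ⊂ ℝⁿ (equivalently, u is globally Lipschitz with ∂u(x) ⊂ Δ for all x). Suppose w ∈ ℝⁿ and at some point x₀ there exists a subgradient p₀ ∈ ∂u(x₀) with ⟨p₀, w⟩ = max_{q∈Δ} ⟨q,w⟩. Then for all t ≥ 0, u(x₀ + t w) = u(x₀) + t⟨p₀,w⟩, i.e. u is affine along the ray x₀ + ℝ_{≥0} w. -/
theorem exists_subgrad (n : ℕ) (u : (Fin n → ℝ) → ℝ) (huconv : ConvexOn ℝ Set.univ u)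
    (x : Fin n → ℝ) : ∃ p : Fin n → ℝ, ∀ y, u x + ∑ i, p i * (y i - x i) ≤ u y := by
  have hu : Continuous u :=
    continuousOn_univ.mp (huconv.continuousOn isOpen_univ)
  set S : Set ((Fin n → ℝ) × ℝ) := {q | u q.1 < q.2} with hS
  have hSconv : Convex ℝ S := by
    have := huconv.convex_strict_epigraph
    simpa [hS, Set.setOf_and] using this
  have hSopen : IsOpen S := isOpen_lt (hu.comp continuous_fst) continuous_snd
  have hxS : (x, u x) ∉ S := by simp [hS]
  obtain ⟨f, hf⟩ := geometric_hahn_banach_open_point hSconv hSopen hxS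
  set c : ℝ := f (0, 1) with hc
  have haux : ∀ (y : Fin n → ℝ) (r : ℝ), f (y, r) = f (y, 0) + r * c := by
    intro y r
    have he : ((y, r) : (Fin n → ℝ) × ℝ) = (y, 0) + r • (0, 1) := by
      simp [Prod.ext_iff]
    rw [he, map_add, map_smul, smul_eq_mul]
  have hclt : c < 0 := by
    have h1 : ((x, u x + 1) : (Fin n → ℝ) × ℝ) ∈ S := by simp [hS]
    have h2 := hf _ h1
    have he : ((x, u x + 1) : (Fin n → ℝ) × ℝ) = (x, u x) + (0, 1) := by
      simp [Prod.ext_iff]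
    rw [he, map_add] at h2
    linarith
  have key : ∀ y, f (y, u y) ≤ f (x, u x) := by
    intro y
    by_contra h
    push_neg at h
    set g : ℝ := f (y, u y) - f (x, u x) with hg
    have hg0 : 0 < g := by linarith
    have hε : 0 < g / (-c) := div_pos hg0 (by linarith)
    have h1 : ((y, u y + g / (-c)) : (Fin n → ℝ) × ℝ) ∈ S := by
      simp only [hS, Set.mem_setOf_eq]
      linarith
    have h2 := hf _ h1
    rw [haux y (u y + g / (-c))] at h2
    have hexp : (u y + g / (-c)) * c = u y * c - g := by
      have hc0 : c ≠ 0 := ne_of_lt hclt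
      have h6 : g / (-c) * c = -g := by
        rw [div_neg, neg_mul, div_mul_cancel₀ g hc0]
      rw [add_mul, h6]
      ring
    rw [hexp] at h2
    have e1 := haux y (u y)
    have e2 := haux x (u x)
    linarith
  refine ⟨fun i => -(f ((fun j => if i = j then (1:ℝ) else 0), 0)) / c, fun y => ?_⟩
  set ℓ : (Fin n → ℝ) →ₗ[ℝ] ℝ := f.toLinearMap.comp (LinearMap.inl ℝ (Fin n → ℝ) ℝ) with hℓ
  have hℓapp : ∀ z : Fin n → ℝ, ℓ z = f (z, 0) := fun z => rfl
  have hsum : ∑ i, -(f ((fun j => if i = j then (1:ℝ) else 0), 0)) / c * (y i - x i)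
      = ℓ (x - y) / c := by
    rw [LinearMap.pi_apply_eq_sum_univ ℓ (x - y), Finset.sum_div]
    refine Finset.sum_congr rfl fun i _ => ?_
    rw [hℓapp]
    simp only [Pi.sub_apply, smul_eq_mul]
    ring
  rw [hsum]
  have hk := key y
  rw [haux y (u y), haux x (u x)] at hk
  have hxy : ℓ (x - y) = f (x, 0) - f (y, 0) := by rw [map_sub, hℓapp, hℓapp]
  rw [hxy]
  have h5 : (f (x, 0) - f (y, 0)) / c ≤ u y - u x :=
    (div_le_iff_of_neg hclt).mpr (by linarith)
  linarith

theorem stmt12 (n : ℕ) (Δ : Set (Fin n → ℝ)) (hcomp : IsCompact Δ) (hconv : Convex ℝ Δ)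
    (u : (Fin n → ℝ) → ℝ) (huconv : ConvexOn ℝ Set.univ u)
    (hsub : ∀ x p : Fin n → ℝ, (∀ y, u x + ∑ i, p i * (y i - x i) ≤ u y) → p ∈ Δ)
    (w x₀ p₀ : Fin n → ℝ)
    (hp₀ : ∀ y, u x₀ + ∑ i, p₀ i * (y i - x₀ i) ≤ u y)
    (hmax : ∀ q ∈ Δ, (∑ i, q i * w i) ≤ ∑ i, p₀ i * w i) :
    ∀ t : ℝ, 0 ≤ t → u (x₀ + t • w) = u x₀ + t * ∑ i, p₀ i * w i := by
  intro t ht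
  have happ : ∀ i, (x₀ + t • w) i = x₀ i + t * w i := fun i => rfl
  have hge : u x₀ + t * ∑ i, p₀ i * w i ≤ u (x₀ + t • w) := by
    have := hp₀ (x₀ + t • w)
    have hsum : ∑ i, p₀ i * ((x₀ + t • w) i - x₀ i) = t * ∑ i, p₀ i * w i := by
      rw [Finset.mul_sum]
      refine Finset.sum_congr rfl fun i _ => ?_
      rw [happ]; ring
    linarith [hsum ▸ this]
  obtain ⟨p, hp⟩ := exists_subgrad n u huconv (x₀ + t • w)
  have hpΔ : p ∈ Δ := hsub _ _ hp
  have hpw : ∑ i, p i * w i ≤ ∑ i, p₀ i * w i := hmax p hpΔ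
  have hle : u (x₀ + t • w) ≤ u x₀ + t * ∑ i, p₀ i * w i := by
    have h1 := hp x₀
    have hsum : ∑ i, p i * (x₀ i - (x₀ + t • w) i) = -(t * ∑ i, p i * w i) := by
      rw [Finset.mul_sum, ← Finset.sum_neg_distrib]
      refine Finset.sum_congr rfl fun i _ => ?_
      rw [happ]; ring
    rw [hsum] at h1
    nlinarith [mul_le_mul_of_nonneg_left hpw ht]
  linarith
end
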